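/- Let G be a group normally generated by elements g₁,…,g_m, and let M be the quotient of G by the normal subgroup generated by all commutators [g_i, h·g_i·h⁻¹] for 1 ≤ i ≤ m and h ∈ G. Then M is generated (as a group) by the images of g₁,…,g_m. -/

import Mathlib

open Subgroup

open scoped commutatorElement

theorem milnor_aux : ∀ (m : ℕ) {G : Type*} [Group G] (g : Fin m → G),
    (∀ (i : Fin m) (h : G), ⁅g i, h * g i * h⁻¹⁆ = 1) →
    Subgroup.normalClosure (Set.range g) = ⊤ →
    Subgroup.closure (Set.range g) = ⊤ := by
  intro m
  induction m with
  | zero =>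
    intro G _ g hc hn
    have : Set.range g = (∅ : Set G) := Set.range_eq_empty g
    rw [this] at hn ⊢
    have he : Group.conjugatesOfSet (∅ : Set G) = ∅ :=
      Set.eq_empty_of_forall_notMem fun x hx => by
        rcases Group.mem_conjugatesOfSet_iff.1 hx with ⟨a, ha, -⟩; exact ha
    rw [Subgroup.normalClosure, he] at hn
    exact hn
  | succ m ih =>
    intro G _ g hc hn
    set N : Subgroup G := Subgroup.normalClosure {g 0} with hN
    haveI : N.Normal := Subgroup.normalClosure_normal
    set π : G →* G ⧸ N := QuotientGroup.mk' N with hπ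
    have hπs : Function.Surjective π := QuotientGroup.mk'_surjective N
    set g' : Fin m → G ⧸ N := fun i => π (g i.succ) with hg'
    -- commuting hypothesis in quotient
    have hc' : ∀ (i : Fin m) (h : G ⧸ N), ⁅g' i, h * g' i * h⁻¹⁆ = 1 := by
      intro i h
      obtain ⟨h₀, rfl⟩ := hπs h
      have := hc i.succ h₀
      calc ⁅g' i, π h₀ * g' i * (π h₀)⁻¹⁆
          = π ⁅g i.succ, h₀ * g i.succ * h₀⁻¹⁆ := by
            simp [map_commutatorElement]
            rfl
        _ = 1 := by rw [this, map_one]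
    -- normal generation in quotient
    have hn' : Subgroup.normalClosure (Set.range g') = ⊤ := by
      have h1 : Subgroup.normalClosure (π '' Set.range g) = ⊤ := by
        rw [← Subgroup.map_normalClosure _ _ hπs, hn]
        exact Subgroup.map_top_of_surjective π hπs
      refine top_unique ?_
      rw [← h1]
      refine Subgroup.normalClosure_le_normal ?_
      rintro x ⟨y, ⟨i, rfl⟩, rfl⟩
      rcases Fin.eq_zero_or_eq_succ i with rfl | ⟨j, rfl⟩
      · have : π (g 0) = 1 := by
          rw [hπ, QuotientGroup.mk'_apply, QuotientGroup.eq_one_iff]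
          exact Subgroup.subset_normalClosure rfl
        rw [this]; exact one_mem _
      · exact Subgroup.subset_normalClosure ⟨j, rfl⟩
    have hQ : Subgroup.closure (Set.range g') = ⊤ := ih g' hc' hn'
    -- decomposition: every x = h * n with h in closure of tails, n in N
    set H₀ : Subgroup G := Subgroup.closure (Set.range fun i : Fin m => g i.succ) with hH₀
    have hdec : ∀ x : G, ∃ h ∈ H₀, h⁻¹ * x ∈ N := by
      intro x
      have : π x ∈ Subgroup.closure (Set.range g') := hQ ▸ Subgroup.mem_top _
      have himg : Set.range g' = π '' Set.range (fun i : Fin m => g i.succ) := by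
        ext y; constructor
        · rintro ⟨i, rfl⟩; exact ⟨g i.succ, ⟨i, rfl⟩, rfl⟩
        · rintro ⟨z, ⟨i, rfl⟩, rfl⟩; exact ⟨i, rfl⟩
      rw [himg, ← MonoidHom.map_closure] at this
      obtain ⟨h, hh, hhx⟩ := this
      refine ⟨h, hh, ?_⟩
      have : π (h⁻¹ * x) = 1 := by rw [map_mul, map_inv, hhx, inv_mul_cancel]
      rwa [hπ, QuotientGroup.mk'_apply, QuotientGroup.eq_one_iff] at this
    -- g 0 commutes with everything in N
    have hcomm : ∀ n ∈ N, n * g 0 = g 0 * n := by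
      intro n hn0
      have : N ≤ Subgroup.centralizer {g 0} := by
        rw [hN, Subgroup.normalClosure]
        refine (Subgroup.closure_le _).2 ?_
        rintro x hx
        rw [Group.mem_conjugatesOfSet_iff] at hx
        obtain ⟨a, ha, hconj⟩ := hx
        rw [Set.mem_singleton_iff] at ha; subst ha
        obtain ⟨c, rfl⟩ := isConj_iff.1 hconj
        intro y hy
        rw [Set.mem_singleton_iff] at hy; subst hy
        have := commutatorElement_eq_one_iff_mul_comm.1 (hc 0 c)
        exact this
      exact (this hn0 (g 0) rfl).symm
    set H : Subgroup G := Subgroup.closure (Set.range g) with hH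
    have hH₀le : H₀ ≤ H := Subgroup.closure_mono (by rintro x ⟨i, rfl⟩; exact ⟨i.succ, rfl⟩)
    have hg0H : g 0 ∈ H := Subgroup.subset_closure ⟨0, rfl⟩
    -- N ≤ H
    have hNH : N ≤ H := by
      rw [hN, Subgroup.normalClosure]
      refine (Subgroup.closure_le _).2 ?_
      rintro x hx
      rw [Group.mem_conjugatesOfSet_iff] at hx
      obtain ⟨a, ha, hconj⟩ := hx
      rw [Set.mem_singleton_iff] at ha; subst ha
      obtain ⟨c, rfl⟩ := isConj_iff.1 hconj
      obtain ⟨h, hh, hn0⟩ := hdec c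
      have hc0 : c = h * (h⁻¹ * c) := by group
      have : c * g 0 * c⁻¹ = h * g 0 * h⁻¹ := by
        rw [hc0]
        have hcm := hcomm _ hn0
        have hcm' : (h⁻¹ * c) * g 0 * (h⁻¹ * c)⁻¹ = g 0 := by
          rw [hcm]; group
        calc h * (h⁻¹ * c) * g 0 * (h * (h⁻¹ * c))⁻¹
            = h * ((h⁻¹ * c) * g 0 * (h⁻¹ * c)⁻¹) * h⁻¹ := by group
          _ = h * g 0 * h⁻¹ := by rw [hcm']
      rw [this]
      exact mul_mem (mul_mem (hH₀le hh) hg0H) (inv_mem (hH₀le hh))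
    -- conclude
    refine top_unique ?_
    intro x _
    obtain ⟨h, hh, hn0⟩ := hdec x
    have : x = h * (h⁻¹ * x) := by group
    rw [this]
    exact mul_mem (hH₀le hh) (hNH hn0)

/-- If G is normally generated by g₁,…,g_m, then the Milnor group
M = G / ⟪[gᵢ, h gᵢ h⁻¹]⟫ is generated (as a group) by the images of the gᵢ. -/
theorem stmt7 (m : ℕ) (G : Type*) [Group G] (g : Fin m → G)
    (hgen : Subgroup.normalClosure (Set.range g) = ⊤) :
    Subgroup.closure
      (Set.range fun i : Fin m =>
        (QuotientGroup.mk (g i) :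
          G ⧸ Subgroup.normalClosure
            {x : G | ∃ (i : Fin m) (h : G), x = ⁅g i, h * g i * h⁻¹⁆})) = ⊤ := by
  set R : Subgroup G := Subgroup.normalClosure
      {x : G | ∃ (i : Fin m) (h : G), x = ⁅g i, h * g i * h⁻¹⁆} with hR
  haveI : R.Normal := Subgroup.normalClosure_normal
  set π : G →* G ⧸ R := QuotientGroup.mk' R with hπ
  have hπs : Function.Surjective π := QuotientGroup.mk'_surjective R
  have key := milnor_aux m (fun i => π (g i)) ?_ ?_
  · convert key using 2
    rfl
  · intro i h
    obtain ⟨h₀, rfl⟩ := hπs h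
    calc ⁅π (g i), π h₀ * π (g i) * (π h₀)⁻¹⁆
        = π ⁅g i, h₀ * g i * h₀⁻¹⁆ := by simp [map_commutatorElement]
      _ = 1 := by
          rw [hπ, QuotientGroup.mk'_apply, QuotientGroup.eq_one_iff]
          exact Subgroup.subset_normalClosure ⟨i, h₀, rfl⟩
  · have h1 : Subgroup.normalClosure (π '' Set.range g) = ⊤ := by
      rw [← Subgroup.map_normalClosure _ _ hπs, hgen]
      exact Subgroup.map_top_of_surjective π hπs
    rw [← Set.range_comp] at h1
    exact h1
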